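/- Let M be the countable (K₀,≤)-generic graph, let A be a finite set of vertices of M, and let X = gcl(A). Then the setwise stabilizer Aut_{{X}}(M) = { g ∈ Aut(M) : g[X] = X } has small index in Aut(M): the cardinality of the coset space Aut(M)/Aut_{{X}}(M) is strictly less than 2^ℵ₀. -/

import Mathlib

open scoped Cardinal

/-- Number of edges of the graph `G` with both endpoints in `A`
(ordered pairs counted and divided by two). -/
noncomputable def edgeCount {V : Type*} (G : SimpleGraph V) (A : Set V) : ℕ :=
  {p : V × V | p.1 ∈ A ∧ p.2 ∈ A ∧ G.Adj p.1 p.2}.ncard / 2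

/-- The pre-dimension `δ(A) = m·|A| − e(A)`. -/
noncomputable def delta {V : Type*} (m : ℕ) (G : SimpleGraph V) (A : Set V) : ℤ :=
  (m : ℤ) * A.ncard - edgeCount G A

/-- `A` is self-sufficient (`≤`-closed) in `B`:  `A ⊆ B` and `δ(A') ≥ δ(A)` for
every finite `A'` with `A ⊆ A' ⊆ B`. -/
def SelfSuff {V : Type*} (m : ℕ) (G : SimpleGraph V) (A B : Set V) : Prop :=
  A ⊆ B ∧ ∀ A' : Set V, A'.Finite → A ⊆ A' → A' ⊆ B → delta m G A ≤ delta m G A'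

/-- A graph belongs to the class `K₀` if `δ(A') ≥ 0` for every set `A'` of its
vertices (used for finite graphs). -/
def InK0 {V : Type*} (m : ℕ) (G : SimpleGraph V) : Prop :=
  ∀ A : Set V, 0 ≤ delta m G A

/-- `G` is a `(K₀,≤)`-generic graph: (i) it is the union of an increasing chain of
finite self-sufficient subsets; (ii) every isomorphism between finite self-sufficient
induced subgraphs extends to an automorphism; (iii) every finite graph in `K₀` is
isomorphic to the induced subgraph on some finite self-sufficient subset. -/
def IsGeneric (m : ℕ) {V : Type} (G : SimpleGraph V) : Prop :=
  (∃ F : ℕ → Set V, (∀ n, (F n).Finite) ∧ (∀ n, F n ⊆ F (n + 1)) ∧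
      (∀ n, SelfSuff m G (F n) Set.univ) ∧ (⋃ n, F n) = Set.univ) ∧
  (∀ A B : Set V, A.Finite → B.Finite → SelfSuff m G A Set.univ → SelfSuff m G B Set.univ →
      ∀ e : G.induce A ≃g G.induce B, ∃ g : G ≃g G, ∀ a : A, g a = (e a : V)) ∧
  (∀ (W : Type) (_ : Fintype W) (H : SimpleGraph W), InK0 m H →
      ∃ s : Set V, s.Finite ∧ SelfSuff m G s Set.univ ∧ Nonempty (H ≃g G.induce s))

/-- The self-sufficient closure `cl(A)`: the intersection of all finite
self-sufficient subsets of the ambient graph containing `A` (which is the smallest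
such set whenever a smallest one exists). -/
def scl {V : Type*} (m : ℕ) (G : SimpleGraph V) (A : Set V) : Set V :=
  ⋂₀ {B : Set V | A ⊆ B ∧ B.Finite ∧ SelfSuff m G B Set.univ}

/-- The dimension `d(A) = δ(cl(A))`. -/
noncomputable def gdim {V : Type*} (m : ℕ) (G : SimpleGraph V) (A : Set V) : ℤ :=
  delta m G (scl m G A)

/-- The geometric closure
`gcl(X) = { v : d(A ∪ {v}) = d(A) for some finite A ⊆ X }`. -/
def gcl {V : Type*} (m : ℕ) (G : SimpleGraph V) (X : Set V) : Set V :=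
  {v | ∃ A : Set V, A ⊆ X ∧ A.Finite ∧ gdim m G (A ∪ {v}) = gdim m G A}

/-- The pointwise stabilizer `Aut_A(M)` of a set `A` of vertices, as a subgroup of
the automorphism group. -/
def pointStab {V : Type*} (G : SimpleGraph V) (A : Set V) : Subgroup (G ≃g G) where
  carrier := {g | ∀ a ∈ A, g a = a}
  one_mem' := fun a _ => rfl
  mul_mem' := by
    intro g h hg hh a ha
    show g (h a) = a
    rw [hh a ha, hg a ha]
  inv_mem' := by
    intro g hg a ha
    show g⁻¹ a = a
    conv_lhs => rw [← hg a ha]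
    simp

/-- The setwise stabilizer `Aut_{{X}}(M) = { g : g[X] = X }` of a set `X` of
vertices, as a subgroup of the automorphism group. -/
def setStab {V : Type*} (G : SimpleGraph V) (X : Set V) : Subgroup (G ≃g G) where
  carrier := {g | (fun v => g v) '' X = X}
  one_mem' := by simp
  mul_mem' := by
    intro g h hg hh
    show (fun v => g (h v)) '' X = X
    rw [show (fun v => g (h v)) = (fun v => g v) ∘ (fun v => h v) from rfl,
      Set.image_comp, hh, hg]
  inv_mem' := by
    intro g hg
    show (fun v => g⁻¹ v) '' X = X
    conv_lhs => rw [← hg]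
    rw [← Set.image_comp]
    have : (fun v => g⁻¹ v) ∘ (fun v => g v) = id := by
      funext v
      show g⁻¹ (g v) = v
      simp
    rw [this, Set.image_id]

/-- The topology of pointwise convergence on the automorphism group of a graph
(the vertex set being discrete). -/
def autTop (V : Type*) (G : SimpleGraph V) : TopologicalSpace (G ≃g G) :=
  TopologicalSpace.induced (fun g => (g : V → V))
    (@Pi.topologicalSpace V (fun _ => V) (fun _ => ⊥))


section Aux

variable {V : Type} (m : ℕ) (G : SimpleGraph V)

lemma edgeCount_image (g : G ≃g G) (S : Set V) :
    edgeCount G ((fun x => g x) '' S) = edgeCount G S := by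
  unfold edgeCount
  congr 1
  have h : {p : V × V | p.1 ∈ (fun x => g x) '' S ∧ p.2 ∈ (fun x => g x) '' S ∧ G.Adj p.1 p.2}
      = (Prod.map (fun x => g x) (fun x => g x)) ''
        {p : V × V | p.1 ∈ S ∧ p.2 ∈ S ∧ G.Adj p.1 p.2} := by
    ext ⟨x, y⟩
    constructor
    · rintro ⟨⟨a, ha, rfl⟩, ⟨b, hb, rfl⟩, hadj⟩
      exact ⟨(a, b), ⟨ha, hb, g.map_rel_iff.mp hadj⟩, rfl⟩
    · rintro ⟨⟨a, b⟩, ⟨ha, hb, hadj⟩, heq⟩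
      rw [← heq]
      exact ⟨⟨a, ha, rfl⟩, ⟨b, hb, rfl⟩, g.map_rel_iff.mpr hadj⟩
  rw [h, Set.ncard_image_of_injective _ (g.injective.prodMap g.injective)]

lemma delta_image (g : G ≃g G) (S : Set V) :
    delta m G ((fun x => g x) '' S) = delta m G S := by
  unfold delta
  rw [edgeCount_image, Set.ncard_image_of_injective _ g.injective]

lemma selfSuff_image (g : G ≃g G) (A : Set V) (h : SelfSuff m G A Set.univ) :
    SelfSuff m G ((fun x => g x) '' A) Set.univ := by
  refine ⟨Set.subset_univ _, ?_⟩
  intro A' hA' hsub _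
  have h2 : A ⊆ (fun x => g.symm x) '' A' := by
    intro a ha
    exact ⟨g a, hsub ⟨a, ha, rfl⟩, by simp⟩
  have h3 := h.2 _ (hA'.image _) h2 (Set.subset_univ _)
  have h4 : (fun x => g x) '' ((fun x => g.symm x) '' A') = A' := by
    rw [← Set.image_comp]
    have : ((fun x => g x) ∘ (fun x => g.symm x)) = id := by
      funext v; simp
    rw [this, Set.image_id]
  calc delta m G ((fun x => g x) '' A) = delta m G A := delta_image m G g A
    _ ≤ delta m G ((fun x => g.symm x) '' A') := h3
    _ = delta m G ((fun x => g x) '' ((fun x => g.symm x) '' A')) :=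
        (delta_image m G g _).symm
    _ = delta m G A' := by rw [h4]

lemma scl_image (g : G ≃g G) (A : Set V) :
    scl m G ((fun x => g x) '' A) = (fun x => g x) '' scl m G A := by
  ext v
  have hmem : ∀ (S : Set V), v ∈ (fun x => g x) '' S ↔ g.symm v ∈ S := by
    intro S
    constructor
    · rintro ⟨b, hb, rfl⟩; simpa using hb
    · intro h; exact ⟨g.symm v, h, by simp⟩
  rw [hmem]
  unfold scl
  simp only [Set.mem_sInter, Set.mem_setOf_eq]
  constructor
  · rintro h B ⟨hAB, hBfin, hBss⟩
    have hv := h ((fun x => g x) '' B)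
      ⟨Set.image_mono hAB, hBfin.image _, selfSuff_image m G g B hBss⟩
    exact (hmem B).mp hv
  · rintro h B ⟨hAB, hBfin, hBss⟩
    have hsub : A ⊆ (fun x => g.symm x) '' B := by
      intro a ha
      exact ⟨g a, hAB ⟨a, ha, rfl⟩, by simp⟩
    have hv := h ((fun x => g.symm x) '' B)
      ⟨hsub, hBfin.image _, selfSuff_image m G g.symm B hBss⟩
    obtain ⟨b, hb, hbe⟩ := hv
    have : b = v := g.symm.injective hbe
    rwa [this] at hb

lemma gdim_image (g : G ≃g G) (A : Set V) :
    gdim m G ((fun x => g x) '' A) = gdim m G A := by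
  unfold gdim
  rw [scl_image, delta_image]

lemma gcl_image_subset (g : G ≃g G) (X : Set V) :
    (fun x => g x) '' gcl m G X ⊆ gcl m G ((fun x => g x) '' X) := by
  rintro _ ⟨w, ⟨B, hBX, hBfin, hdim⟩, rfl⟩
  refine ⟨(fun x => g x) '' B, Set.image_mono hBX, hBfin.image _, ?_⟩
  rw [← Set.image_singleton (a := w), ← Set.image_union, gdim_image, gdim_image, hdim]

lemma pointStab_le_setStab_gcl (A : Set V) :
    pointStab G A ≤ setStab G (gcl m G A) := by
  intro g hg
  have hfix : ∀ h : G ≃g G, h ∈ pointStab G A → (fun x => h x) '' A = A := by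
    intro h hh
    ext v
    constructor
    · rintro ⟨a, ha, rfl⟩
      show h a ∈ A
      rw [hh a ha]; exact ha
    · intro hv; exact ⟨v, hv, hh v hv⟩
  have hginv : g⁻¹ ∈ pointStab G A := (pointStab G A).inv_mem hg
  show (fun v => g v) '' gcl m G A = gcl m G A
  apply Set.Subset.antisymm
  · have h1 := gcl_image_subset m G g A
    rwa [hfix g hg] at h1
  · intro v hv
    have h2 := gcl_image_subset m G g⁻¹ A
    rw [hfix g⁻¹ hginv] at h2
    refine ⟨g⁻¹ v, h2 ⟨v, hv, rfl⟩, ?_⟩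
    show g (g⁻¹ v) = v
    have : (g * g⁻¹) v = v := by rw [mul_inv_cancel]; rfl
    exact this

end Aux

/-- For `X = gcl(A)` with `A` finite, the setwise stabilizer of `X` has small
index in `Aut(M)`: the coset space has cardinality `< 2^ℵ₀`. -/
theorem setStab_gcl_small_index (m : ℕ) (hm : 2 ≤ m) (V : Type)
    [Countable V] [Infinite V] (G : SimpleGraph V) (hG : IsGeneric m G)
    (A : Set V) (hA : A.Finite) :
    Cardinal.mk ((G ≃g G) ⧸ setStab G (gcl m G A)) < Cardinal.continuum := by
  classical
  have hle := pointStab_le_setStab_gcl m G A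
  have hsurj : ∃ f : (G ≃g G) ⧸ pointStab G A → (G ≃g G) ⧸ setStab G (gcl m G A),
      Function.Surjective f := by
    refine ⟨Quotient.map' id ?_, ?_⟩
    · intro a b hab
      rw [QuotientGroup.leftRel_apply] at hab ⊢
      exact hle hab
    · intro q
      refine Quotient.inductionOn' q (fun g => ⟨Quotient.mk'' g, ?_⟩)
      rw [Quotient.map'_mk'']
      rfl
  have hwd : ∀ a b : G ≃g G, (QuotientGroup.leftRel (pointStab G A)) a b →
      (fun x : ↥A => a (x : V)) = (fun x : ↥A => b (x : V)) := by
    intro a b hab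
    rw [QuotientGroup.leftRel_apply] at hab
    funext x
    have h1 : a⁻¹ (b (x : V)) = (x : V) := hab (x : V) x.2
    have h2 : a (a⁻¹ (b (x : V))) = a (x : V) := by rw [h1]
    have h3 : a (a⁻¹ (b (x : V))) = b (x : V) := by
      have : (a * a⁻¹) (b (x : V)) = b (x : V) := by rw [mul_inv_cancel]; rfl
      exact this
    show (a (x : V) : V) = b (x : V)
    rw [← h3, h2]
  have hinj : ∃ f : (G ≃g G) ⧸ pointStab G A → (↥A → V), Function.Injective f := by
    refine ⟨fun q => Quotient.liftOn' q (fun g => fun a : ↥A => g (a : V)) hwd, ?_⟩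
    intro q1 q2
    refine Quotient.inductionOn₂' q1 q2 (fun a b heq => ?_)
    apply Quotient.sound'
    rw [QuotientGroup.leftRel_apply]
    intro x hx
    have hx2 := congrFun heq ⟨x, hx⟩
    show a⁻¹ (b x) = x
    have hba : b x = a x := hx2.symm
    rw [hba]
    have : (a⁻¹ * a) x = x := by rw [inv_mul_cancel]; rfl
    exact this
  obtain ⟨f, hf⟩ := hsurj
  obtain ⟨j, hj⟩ := hinj
  haveI : Finite ↥A := hA.to_subtype
  have h1 : Cardinal.mk ((G ≃g G) ⧸ setStab G (gcl m G A)) ≤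
      Cardinal.mk ((G ≃g G) ⧸ pointStab G A) := Cardinal.mk_le_of_surjective hf
  have h2 : Cardinal.mk ((G ≃g G) ⧸ pointStab G A) ≤ Cardinal.mk (↥A → V) :=
    Cardinal.mk_le_of_injective hj
  have h3 : Cardinal.mk (↥A → V) ≤ Cardinal.aleph0 := Cardinal.mk_le_aleph0
  exact lt_of_le_of_lt (h1.trans (h2.trans h3)) Cardinal.aleph0_lt_continuum
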